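/- Let λ be a partition with λ_i > λ_{i+1} > λ_{i+2} (indices from 1, with trailing zeros), and let ν be obtained from λ by decreasing λ_i by 1 and increasing λ_{i+2} by 1. Then ν is a partition, it has the same number of odd columns as λ, and b(ν) = b(λ) + 2. -/

import Mathlib

/-- A standard Young tableau of shape `μ`: a filling of the cells of `μ`
by `1,…,n` (each exactly once, `n = μ.card`), strictly increasing along
rows and columns. -/
structure SYT (μ : YoungDiagram) where
  entry : ℕ × ℕ → ℕ
  mapsTo : ∀ c ∈ μ.cells, entry c ∈ Finset.Icc 1 μ.card
  injOn : ∀ c ∈ μ.cells, ∀ d ∈ μ.cells, entry c = entry d → c = d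
  surjOn : ∀ v ∈ Finset.Icc 1 μ.card, ∃ c ∈ μ.cells, entry c = v
  row_lt : ∀ {i j1 j2 : ℕ}, j1 < j2 → (i, j2) ∈ μ → entry (i, j1) < entry (i, j2)
  col_lt : ∀ {i1 i2 j : ℕ}, i1 < i2 → (i2, j) ∈ μ → entry (i1, j) < entry (i2, j)

/-- `i` is a descent of the tableau `T`: the entry `i+1` lies in a strictly
lower row than the entry `i`. -/
def SYT.des {μ : YoungDiagram} (T : SYT μ) (i : ℕ) : Prop :=
  ∃ c ∈ μ.cells, ∃ d ∈ μ.cells, T.entry c = i ∧ T.entry d = i + 1 ∧ c.1 < d.1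

open scoped Classical in
/-- The major index of a standard Young tableau: the sum of its descents. -/
noncomputable def SYT.maj {μ : YoungDiagram} (T : SYT μ) : ℕ :=
  ∑ i ∈ Finset.range μ.card, if T.des i then i else 0

/-- `bstat μ = ∑ (i-1) μ_i` (rows 1-indexed), i.e. `∑ i * μ.rowLen i` with rows 0-indexed. -/
def bstat (μ : YoungDiagram) : ℕ :=
  ∑ i ∈ Finset.range μ.card, i * μ.rowLen i

/-- The number of columns of `μ` of odd length. -/
def oddCols (μ : YoungDiagram) : ℕ :=
  ((Finset.range μ.card).filter fun j => Odd (μ.colLen j)).card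

/-- Moving one square: if `λ_i > λ_{i+1} > λ_{i+2}` (rows 0-indexed), the shape `ν`
obtained by decreasing row `i` by one and increasing row `i+2` by one is a Young
diagram with the same number of odd columns and `b(ν) = b(λ) + 2`. -/
theorem move_square (l : YoungDiagram) (i : ℕ)
    (h1 : l.rowLen (i + 1) < l.rowLen i) (h2 : l.rowLen (i + 2) < l.rowLen (i + 1)) :
    ∃ ν : YoungDiagram,
      ν.rowLen i = l.rowLen i - 1 ∧
      ν.rowLen (i + 2) = l.rowLen (i + 2) + 1 ∧
      (∀ j, j ≠ i → j ≠ i + 2 → ν.rowLen j = l.rowLen j) ∧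
      oddCols ν = oddCols l ∧
      bstat ν = bstat l + 2 := by
  classical
  set r : ℕ → ℕ := fun j =>
    if j = i then l.rowLen i - 1 else if j = i + 2 then l.rowLen (i + 2) + 1 else l.rowLen j
    with hr
  have hr_i : r i = l.rowLen i - 1 := by simp [hr]
  have hr_i2 : r (i+2) = l.rowLen (i+2) + 1 := by simp [hr]
  have hr_other : ∀ j, j ≠ i → j ≠ i+2 → r j = l.rowLen j := by
    intro j hj hj2; simp [hr, hj, hj2]
  have hr_anti : Antitone r := by
    apply antitone_nat_of_succ_le
    intro n
    by_cases e1 : n + 1 < i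
    · rw [hr_other n (by omega) (by omega), hr_other (n+1) (by omega) (by omega)]
      exact l.rowLen_anti _ _ (by omega)
    by_cases e2 : n + 1 = i
    · rw [hr_other n (by omega) (by omega), e2, hr_i]
      have := l.rowLen_anti n i (by omega)
      omega
    by_cases e3 : n = i
    · subst e3
      rw [hr_i, hr_other (n+1) (by omega) (by omega)]
      omega
    by_cases e4 : n = i + 1
    · subst e4
      rw [hr_i2, hr_other (i+1) (by omega) (by omega)]
      omega
    by_cases e5 : n = i + 2
    · subst e5
      rw [hr_i2, hr_other (i+3) (by omega) (by omega)]
      have := l.rowLen_anti (i+2) (i+3) (by omega)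
      omega
    · rw [hr_other n (by omega) (by omega), hr_other (n+1) (by omega) (by omega)]
      exact l.rowLen_anti _ _ (by omega)
  set c1 : ℕ := l.rowLen i - 1 with hc1
  set c2 : ℕ := l.rowLen (i+2) with hc2
  have hc12 : c2 < c1 := by omega
  have hy : (i, c1) ∈ l := by rw [YoungDiagram.mem_iff_lt_rowLen]; omega
  have hx : (i+2, c2) ∉ l := by rw [YoungDiagram.mem_iff_lt_rowLen]; omega
  -- membership characterization of the new cell set
  have hmem : ∀ a b : ℕ, ((a, b) ∈ insert (i+2, c2) (l.cells.erase (i, c1))) ↔ b < r a := by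
    intro a b
    rw [Finset.mem_insert, Finset.mem_erase, YoungDiagram.mem_cells,
      YoungDiagram.mem_iff_lt_rowLen]
    by_cases ha : a = i
    · subst ha
      rw [hr_i]
      simp only [ne_eq, Prod.mk.injEq, true_and, and_true, not_and]
      omega
    by_cases ha2 : a = i + 2
    · subst ha2
      rw [hr_i2]
      simp only [ne_eq, Prod.mk.injEq, true_and, and_true, not_and]
      omega
    · rw [hr_other a ha ha2]
      simp only [ne_eq, Prod.mk.injEq, true_and, and_true, not_and]
      omega
  have hlow : IsLowerSet (↑(insert (i+2, c2) (l.cells.erase (i, c1))) : Set (ℕ × ℕ)) := by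
    rintro ⟨a, b⟩ ⟨a', b'⟩ ⟨hle1, hle2⟩ hab
    simp only [Finset.coe_insert, Set.mem_insert_iff, Finset.coe_erase, Set.mem_diff] at hab ⊢
    have hab' : b < r a := by
      rw [← hmem a b]
      simp only [Finset.mem_insert, Finset.mem_erase, Finset.mem_coe]
      tauto
    have hb' : b' < r a' := lt_of_le_of_lt hle2 (lt_of_lt_of_le hab' (hr_anti hle1))
    have := (hmem a' b').mpr hb'
    simp only [Finset.mem_insert, Finset.mem_erase, Finset.mem_coe] at this
    tauto
  set ν : YoungDiagram := ⟨insert (i+2, c2) (l.cells.erase (i, c1)), hlow⟩ with hν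
  have hν_mem : ∀ a b : ℕ, (a, b) ∈ ν ↔ b < r a := hmem
  have hν_row : ∀ a, ν.rowLen a = r a := by
    intro a
    have key : ∀ b, b < ν.rowLen a ↔ b < r a := fun b =>
      (YoungDiagram.mem_iff_lt_rowLen).symm.trans (hν_mem a b)
    have h1' := key (ν.rowLen a)
    have h2' := key (r a)
    omega
  -- column lengths
  have hl_c1 : l.colLen c1 = i + 1 := by
    have key : ∀ j, j < l.colLen c1 ↔ j < i + 1 := by
      intro j
      rw [← YoungDiagram.mem_iff_lt_colLen, YoungDiagram.mem_iff_lt_rowLen]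
      constructor
      · intro h; by_contra hj; push_neg at hj
        have := l.rowLen_anti (i+1) j (by omega); omega
      · intro h; have := l.rowLen_anti j i (by omega); omega
    have h1' := key (l.colLen c1); have h2' := key (i+1); omega
  have hν_c1 : ν.colLen c1 = i := by
    have key : ∀ j, j < ν.colLen c1 ↔ j < i := by
      intro j
      rw [← YoungDiagram.mem_iff_lt_colLen, hν_mem]
      constructor
      · intro h; by_contra hj; push_neg at hj
        have := hr_anti hj; rw [hr_i] at this; omega
      · intro h
        rw [hr_other j (by omega) (by omega)]
        have := l.rowLen_anti j i (by omega); omega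
    have h1' := key (ν.colLen c1); have h2' := key i; omega
  have hl_c2 : l.colLen c2 = i + 2 := by
    have key : ∀ j, j < l.colLen c2 ↔ j < i + 2 := by
      intro j
      rw [← YoungDiagram.mem_iff_lt_colLen, YoungDiagram.mem_iff_lt_rowLen]
      constructor
      · intro h; by_contra hj; push_neg at hj
        have := l.rowLen_anti (i+2) j (by omega); omega
      · intro h; have := l.rowLen_anti j (i+1) (by omega); omega
    have h1' := key (l.colLen c2); have h2' := key (i+2); omega
  have hν_c2 : ν.colLen c2 = i + 3 := by
    have key : ∀ j, j < ν.colLen c2 ↔ j < i + 3 := by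
      intro j
      rw [← YoungDiagram.mem_iff_lt_colLen, hν_mem]
      constructor
      · intro h; by_contra hj; push_neg at hj
        rw [hr_other j (by omega) (by omega)] at h
        have := l.rowLen_anti (i+2) j (by omega); omega
      · intro h
        by_cases hj : j = i
        · rw [hj, hr_i]; omega
        by_cases hj2 : j = i + 2
        · rw [hj2, hr_i2]; omega
        · rw [hr_other j hj hj2]
          have := l.rowLen_anti j (i+1) (by omega); omega
    have h1' := key (ν.colLen c2); have h2' := key (i+3); omega
  have hν_colother : ∀ c, c ≠ c1 → c ≠ c2 → ν.colLen c = l.colLen c := by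
    intro c hcc1 hcc2
    have key : ∀ j, j < ν.colLen c ↔ j < l.colLen c := by
      intro j
      rw [← YoungDiagram.mem_iff_lt_colLen, hν_mem, ← YoungDiagram.mem_iff_lt_colLen,
        YoungDiagram.mem_iff_lt_rowLen]
      by_cases hj : j = i
      · rw [hj, hr_i]; omega
      by_cases hj2 : j = i + 2
      · rw [hj2, hr_i2]; omega
      · rw [hr_other j hj hj2]
    have h1' := key (ν.colLen c); have h2' := key (l.colLen c); omega
  -- cards
  have hy' : (i, c1) ∈ l.cells := hy
  have hcc : l.card = l.cells.card := rfl
  have hx' : (i+2, c2) ∉ l.cells.erase (i, c1) := fun h => hx (Finset.mem_of_mem_erase h)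
  have hcardpos : 0 < l.card := Finset.card_pos.mpr ⟨_, hy'⟩
  have hcard : ν.card = l.card := by
    show (insert (i+2, c2) (l.cells.erase (i, c1))).card = l.cells.card
    rw [Finset.card_insert_of_notMem hx', Finset.card_erase_of_mem hy']
    have : 0 < l.cells.card := Finset.card_pos.mpr ⟨_, hy'⟩
    omega
  have hrow0 : l.rowLen 0 ≤ l.card := by
    have hsub : l.row 0 ⊆ l.cells := by
      intro x hxx; exact (YoungDiagram.mem_row_iff.mp hxx).1
    have := Finset.card_le_card hsub
    rwa [← YoungDiagram.rowLen_eq_card] at this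
  have hc1N : c1 < l.card := by
    have := l.rowLen_anti 0 i (by omega); omega
  have hc2N : c2 < l.card := by
    have := l.rowLen_anti 0 (i+1) (by omega); omega
  have hNbig : i + 2 < l.card := by
    have hsub : insert (i, c1) (l.col c2) ⊆ l.cells := by
      intro x hxx
      rcases Finset.mem_insert.mp hxx with h | h
      · subst h; exact hy'
      · exact (YoungDiagram.mem_col_iff.mp h).1
    have hni : (i, c1) ∉ l.col c2 := by
      intro h
      have := (YoungDiagram.mem_col_iff.mp h).2
      simp at this; omega
    have := Finset.card_le_card hsub
    rw [Finset.card_insert_of_notMem hni, ← YoungDiagram.colLen_eq_card, hl_c2] at this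
    omega
  refine ⟨ν, by rw [hν_row, hr_i], by rw [hν_row, hr_i2],
    fun j hj hj2 => by rw [hν_row, hr_other j hj hj2], ?_, ?_⟩
  · -- oddCols
    unfold oddCols
    rw [hcard]
    set f : ℕ → ℕ := fun j => if j = c1 then c2 else if j = c2 then c1 else j with hf
    have hff : ∀ j, f (f j) = j := by
      intro j
      simp only [hf]
      split_ifs <;> omega
    have hfN : ∀ j, j < l.card → f j < l.card := by
      intro j hj
      simp only [hf]
      split_ifs <;> omega
    have hc21 : c2 ≠ c1 := by omega
    have hfc1 : f c1 = c2 := by simp [hf]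
    have hfc2 : f c2 = c1 := by simp [hf, hc21]
    have hfother : ∀ j, j ≠ c1 → j ≠ c2 → f j = j := by
      intro j hj hj2; simp [hf, hj, hj2]
    have hparity : ∀ j, Odd (ν.colLen j) ↔ Odd (l.colLen (f j)) := by
      intro j
      by_cases hj : j = c1
      · subst hj
        rw [hν_c1, hfc1, hl_c2, Nat.odd_iff, Nat.odd_iff]
        omega
      by_cases hj2 : j = c2
      · subst hj2
        rw [hν_c2, hfc2, hl_c1, Nat.odd_iff, Nat.odd_iff]
        omega
      · rw [hν_colother j hj hj2, hfother j hj hj2]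
    apply Finset.card_nbij' f f
    · intro a ha
      simp only [Finset.mem_coe, Finset.mem_filter, Finset.mem_range] at ha ⊢
      exact ⟨hfN a ha.1, (hparity a).mp ha.2⟩
    · intro a ha
      simp only [Finset.mem_coe, Finset.mem_filter, Finset.mem_range] at ha ⊢
      refine ⟨hfN a ha.1, ?_⟩
      rw [hparity (f a), hff]
      exact ha.2
    · intro a _; exact hff a
    · intro a _; exact hff a
  · -- bstat
    unfold bstat
    rw [hcard]
    have hiN : i ∈ Finset.range l.card := by simp; omega
    have hi2N : i + 2 ∈ (Finset.range l.card).erase i := by simp; omega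
    rw [← Finset.add_sum_erase _ (fun j => j * ν.rowLen j) hiN,
      ← Finset.add_sum_erase _ (fun j => j * ν.rowLen j) hi2N,
      ← Finset.add_sum_erase _ (fun j => j * l.rowLen j) hiN,
      ← Finset.add_sum_erase _ (fun j => j * l.rowLen j) hi2N]
    have hsum : ∑ j ∈ ((Finset.range l.card).erase i).erase (i+2), j * ν.rowLen j
        = ∑ j ∈ ((Finset.range l.card).erase i).erase (i+2), j * l.rowLen j := by
      apply Finset.sum_congr rfl
      intro j hj
      simp only [Finset.mem_erase] at hj
      rw [hν_row, hr_other j hj.2.1 hj.1]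
    rw [hsum, hν_row i, hν_row (i+2), hr_i, hr_i2]
    obtain ⟨A, hA⟩ : ∃ A, l.rowLen i = A + 1 := ⟨l.rowLen i - 1, by omega⟩
    rw [hc1, hA]
    simp only [Nat.add_sub_cancel]
    ring
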